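/- For any field F and integers 0 ≤ d ≤ m-1, the total bigraded Betti number of the d-skeleton of the full simplex on [m] satisfies D̃(Δ^[m]_(d);F) = g(m, d+1) + 1 = Σ_{i=0}^{m-d-2} C(m, m-i)·C(m-i-1, d+1) + 1. -/

import Mathlib

/-- An (abstract) simplicial complex: a collection of finite subsets of `ℕ`
closed under taking subsets. -/
def IsComplex (K : Finset (Finset ℕ)) : Prop :=
  ∀ σ ∈ K, ∀ τ ⊆ σ, τ ∈ K

/-- The vertex set of a complex: the union of all its simplices. -/
def verts (K : Finset (Finset ℕ)) : Finset ℕ := K.sup id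

/-- The space of (augmented) simplicial `j`-chains: formal `F`-linear combinations of
simplices of cardinality `j` (so chain degree `j` corresponds to dimension `j - 1`;
degree `0` is spanned by the empty simplex). -/
abbrev Chain (F : Type*) [Field F] (K : Finset (Finset ℕ)) (j : ℕ) : Type _ :=
  {σ // σ ∈ K.filter (fun σ => σ.card = j)} → F

/-- The simplicial boundary operator (of the augmented chain complex), with the usual
signs `(-1)^{position of the deleted vertex}`. -/
noncomputable def bdry (F : Type*) [Field F] (K : Finset (Finset ℕ)) (j : ℕ) :
    Chain F K (j + 1) →ₗ[F] Chain F K j where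
  toFun c := fun τ =>
    ∑ v ∈ verts K,
      if h : v ∉ τ.1 ∧ insert v τ.1 ∈ K.filter (fun σ => σ.card = j + 1) then
        (-1 : F) ^ ((τ.1.filter (fun u => u < v)).card) * c ⟨insert v τ.1, h.2⟩
      else 0
  map_add' c d := by
    funext τ
    show _ = (_ : F) + (_ : F)
    rw [← Finset.sum_add_distrib]
    refine Finset.sum_congr rfl fun v _ => ?_
    by_cases h : v ∉ τ.1 ∧ insert v τ.1 ∈ K.filter (fun σ => σ.card = j + 1)
    · rw [dif_pos h, dif_pos h, dif_pos h, ← mul_add]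
      rfl
    · rw [dif_neg h, dif_neg h, dif_neg h, add_zero]
  map_smul' a c := by
    funext τ
    show _ = a * _
    rw [Finset.mul_sum]
    refine Finset.sum_congr rfl fun v _ => ?_
    by_cases h : v ∉ τ.1 ∧ insert v τ.1 ∈ K.filter (fun σ => σ.card = j + 1)
    · rw [dif_pos h, dif_pos h]
      show _ * (a * _) = _
      ring
    · rw [dif_neg h, dif_neg h, mul_zero]

/-- The dimension of the `j`-th homology of the augmented simplicial chain complex of `K`.
Degree `j` corresponds to the reduced homology group `H̃_{j-1}` of the realization of `K`. -/
noncomputable def hBetti (F : Type*) [Field F] (K : Finset (Finset ℕ)) : ℕ → ℕ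
  | 0 => Module.finrank F (Chain F K 0) - Module.finrank F (LinearMap.range (bdry F K 0))
  | j + 1 =>
      Module.finrank F (LinearMap.ker (bdry F K j)) -
        Module.finrank F (LinearMap.range (bdry F K (j + 1)))

/-- The reduced total Betti number `t̃b(K; F) = ∑ i dim H̃ i (K; F)` of (the geometric
realization of) `K`, with the convention `t̃b(∅; F) = 1` (coming from `β̃₋₁(∅) = 1`;
note that if `K` is nonempty and closed under subsets then `∅ ∈ K` and the augmented
chain complex accounts for `β̃₋₁` automatically). -/
noncomputable def rtb (F : Type*) [Field F] (K : Finset (Finset ℕ)) : ℕ :=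
  if K = ∅ then 1 else ∑ j ∈ Finset.range ((verts K).card + 1), hBetti F K j

/-- The full subcomplex `K|_J` of `K` on a vertex set `J`. -/
def restr (K : Finset (Finset ℕ)) (J : Finset ℕ) : Finset (Finset ℕ) :=
  K.filter (fun σ => σ ⊆ J)

/-- The total bigraded Betti number `D̃(K; F) = ∑_{J ⊆ V} t̃b(K|_J; F)`
with respect to a ground vertex set `V`. -/
noncomputable def Dtilde (F : Type*) [Field F] (V : Finset ℕ) (K : Finset (Finset ℕ)) : ℕ :=
  ∑ J ∈ V.powerset, rtb F (restr K J)


/-- The `k`-skeleton `Δ^[m]_(k)` of the full simplex on the vertex set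
`[m] = {0, 1, …, m-1}`: all subsets of cardinality at most `k + 1`. -/
def skel (m k : ℕ) : Finset (Finset ℕ) :=
  (Finset.range m).powerset.filter (fun σ => σ.card ≤ k + 1)

/-- The `k`-skeleton of the full simplex on `[m]` for an integer `k`
(so `k = -1` gives the empty complex `{∅}`). -/
def skelZ (m : ℕ) (k : ℤ) : Finset (Finset ℕ) :=
  (Finset.range m).powerset.filter (fun σ => (σ.card : ℤ) ≤ k + 1)

/-- `Δ^[m]_(k)⟨d⟩`: the union of the `k`-skeleton of the full simplex on `[m]`
with the single `d`-simplex `{0, 1, …, d}` and all its faces. -/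
def skelD (m k d : ℕ) : Finset (Finset ℕ) :=
  skel m k ∪ (Finset.range (d + 1)).powerset

/-- `K` and `L` are isomorphic simplicial complexes: some injection of the vertex
set of `K` maps the simplices of `K` exactly onto the simplices of `L`. -/
def SIso (K L : Finset (Finset ℕ)) : Prop :=
  ∃ f : ℕ → ℕ, Set.InjOn f ↑(verts K) ∧ L = K.image (fun σ => σ.image f)

/-- `g(m,d) = ∑_{j=d+1}^{m} C(m,j)·C(j-1,d)`. -/
def g (m d : ℕ) : ℕ := ∑ j ∈ Finset.Icc (d + 1) m, m.choose j * (j - 1).choose d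

/-- The join `K * L` of two simplicial complexes (on disjoint vertex sets). -/
def sJoin (K L : Finset (Finset ℕ)) : Finset (Finset ℕ) :=
  (K ×ˢ L).image fun p => p.1 ∪ p.2

/-- A `d`-dimensional simplicial complex `K` with `m` vertices is tight over `F` if
`D̃(K;F) = 2^{m-d-1}` (note `m - d - 1 = m - (d+1)` and `d + 1 = max σ∈K |σ|`),
where `D̃` is computed with respect to the vertex set of `K`. -/
def IsTight (F : Type*) [Field F] (K : Finset (Finset ℕ)) : Prop :=
  Dtilde F (verts K) K = 2 ^ ((verts K).card - K.sup Finset.card)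

/-- The link of a simplex `σ` in `K`. -/
def linkK (K : Finset (Finset ℕ)) (σ : Finset ℕ) : Finset (Finset ℕ) :=
  K.filter (fun τ => Disjoint τ σ ∧ τ ∪ σ ∈ K)

/-- `K` is pure: every maximal simplex has the maximum cardinality `dim K + 1`. -/
def IsPure (K : Finset (Finset ℕ)) : Prop :=
  ∀ σ ∈ K, (∀ τ ∈ K, σ ⊆ τ → σ = τ) → σ.card = K.sup Finset.card

/-- A near-cone (with apex vertex `0`): for every simplex `S` with `0 ∉ S` and every
`j ∈ S`, `(S \ j) ∪ {0}` is again a simplex. -/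
def IsNearCone (Δ : Finset (Finset ℕ)) : Prop :=
  ∀ S ∈ Δ, 0 ∉ S → ∀ j ∈ S, insert 0 (S.erase j) ∈ Δ

/-- `B(Δ) = {S ∈ Δ : S ∪ {0} ∉ Δ}` for a near-cone `Δ` with apex `0`. -/
def BSet (Δ : Finset (Finset ℕ)) : Finset (Finset ℕ) :=
  Δ.filter (fun S => insert 0 S ∉ Δ)

/-- A Sperner family of the finite set `X`: a family of subsets of `X`, no member
containing another member. -/
def IsSperner (X : Finset ℕ) (F : Finset (Finset ℕ)) : Prop :=
  (∀ A ∈ F, A ⊆ X) ∧ ∀ A ∈ F, ∀ B ∈ F, A ⊆ B → A = B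

/-- The geometric realization of `K` is disconnected: the vertex set splits into two
nonempty parts such that every simplex lies entirely in one of the parts. -/
def IsDisconn (K : Finset (Finset ℕ)) : Prop :=
  ∃ A B : Finset ℕ, A.Nonempty ∧ B.Nonempty ∧ Disjoint A B ∧ A ∪ B = verts K ∧
    ∀ σ ∈ K, σ ⊆ A ∨ σ ⊆ B

/-- The boundary `∂Δ^A` of the full simplex on the vertex set `A`: all proper subsets
of `A`.  (For `|A| = 1` this is the empty complex `{∅}`.) -/
def bdSimplex (A : Finset ℕ) : Finset (Finset ℕ) := A.powerset.erase A




namespace Stmt9Aux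

open Finset

variable (F : Type*) [Field F]

/-- The `d`-skeleton of the full simplex on vertex set `J`. -/
def KJ (J : Finset ℕ) (d : ℕ) : Finset (Finset ℕ) :=
  J.powerset.filter (fun σ => σ.card ≤ d + 1)

lemma mem_KJ {J : Finset ℕ} {d : ℕ} {σ : Finset ℕ} :
    σ ∈ KJ J d ↔ σ ⊆ J ∧ σ.card ≤ d + 1 := by
  simp [KJ]

lemma isComplex_KJ (J : Finset ℕ) (d : ℕ) : IsComplex (KJ J d) := by
  intro σ hσ τ hτ
  rw [mem_KJ] at *
  exact ⟨hτ.trans hσ.1, le_trans (card_le_card hτ) hσ.2⟩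

lemma restr_skel {m d : ℕ} {J : Finset ℕ} (hJ : J ⊆ Finset.range m) :
    restr (skel m d) J = KJ J d := by
  ext σ
  simp only [restr, skel, KJ, mem_filter, mem_powerset]
  constructor
  · rintro ⟨⟨-, h2⟩, h3⟩; exact ⟨h3, h2⟩
  · rintro ⟨h1, h2⟩; exact ⟨⟨h1.trans hJ, h2⟩, h1⟩

lemma verts_KJ (J : Finset ℕ) (d : ℕ) : verts (KJ J d) = J := by
  apply subset_antisymm
  · intro a ha
    rw [verts, Finset.mem_sup] at ha
    obtain ⟨σ, hσ, haσ⟩ := ha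
    exact (mem_KJ.mp hσ).1 haσ
  · intro a ha
    rw [verts, Finset.mem_sup]
    exact ⟨{a}, mem_KJ.mpr ⟨by simpa, by simp⟩, by simp⟩

lemma filter_KJ (J : Finset ℕ) (d i : ℕ) (hi : i ≤ d + 1) :
    (KJ J d).filter (fun σ => σ.card = i) = J.powersetCard i := by
  ext σ
  simp only [KJ, mem_filter, mem_powerset, mem_powersetCard, filter_filter]
  constructor
  · rintro ⟨h1, -, h3⟩; exact ⟨h1, h3⟩
  · rintro ⟨h1, h2⟩; exact ⟨h1, h2 ▸ hi, h2⟩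

lemma finrank_chain (J : Finset ℕ) (d i : ℕ) (hi : i ≤ d + 1) :
    Module.finrank F (Chain F (KJ J d) i) = J.card.choose i := by
  rw [Module.finrank_fintype_fun_eq_card, Fintype.card_coe, filter_KJ J d i hi,
    card_powersetCard]

lemma finrank_chain_zero (J : Finset ℕ) (d i : ℕ) (hi : d + 1 < i) :
    Module.finrank F (Chain F (KJ J d) i) = 0 := by
  rw [Module.finrank_fintype_fun_eq_card, Fintype.card_coe]
  convert Finset.card_empty
  ext σ
  simp only [mem_filter, notMem_empty, iff_false, not_and, mem_KJ]
  rintro ⟨-, h2⟩ rfl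
  omega

lemma bdry_apply (K : Finset (Finset ℕ)) (j : ℕ) (c : Chain F K (j + 1))
    (τ : {σ // σ ∈ K.filter (fun σ => σ.card = j)}) :
    bdry F K j c τ =
      ∑ v ∈ verts K,
        if h : v ∉ τ.1 ∧ insert v τ.1 ∈ K.filter (fun σ => σ.card = j + 1) then
          (-1 : F) ^ ((τ.1.filter (fun u => u < v)).card) * c ⟨insert v τ.1, h.2⟩
        else 0 := rfl

lemma card_filter_lt_insert (v w : ℕ) (τ : Finset ℕ) (hv : v ∉ τ) :
    ((insert v τ).filter (fun u => u < w)).card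
      = (τ.filter (fun u => u < w)).card + (if v < w then 1 else 0) := by
  rw [filter_insert]
  split
  · rw [card_insert_of_notMem (fun hmem => hv (mem_filter.mp hmem).1)]
  · rw [add_zero]

lemma neg_one_pow_antisym {v w : ℕ} (hvw : v ≠ w) (τ : Finset ℕ) (hv : v ∉ τ) (hw : w ∉ τ) :
    (-1 : F) ^ (τ.filter (fun u => u < v)).card *
        (-1 : F) ^ (((insert v τ).filter (fun u => u < w)).card)
      = -((-1 : F) ^ (τ.filter (fun u => u < w)).card *
          (-1 : F) ^ (((insert w τ).filter (fun u => u < v)).card)) := by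
  rw [card_filter_lt_insert v w τ hv, card_filter_lt_insert w v τ hw]
  rcases hvw.lt_or_gt with h | h
  · rw [if_pos h, if_neg (by omega)]
    ring
  · rw [if_neg (by omega), if_pos h]
    ring

lemma bdry_bdry (K : Finset (Finset ℕ)) (hK : IsComplex K) (j : ℕ) (c : Chain F K (j + 1 + 1)) :
    bdry F K j (bdry F K (j + 1) c) = 0 := by
  classical
  funext τ
  rw [bdry_apply]
  show _ = (0 : F)
  set G : ℕ → ℕ → F := fun v w =>
    if h : v ∉ τ.1 ∧ w ∉ insert v τ.1 ∧
        insert w (insert v τ.1) ∈ K.filter (fun σ => σ.card = j + 1 + 1) then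
      (-1 : F) ^ ((τ.1.filter (fun u => u < v)).card) *
        ((-1 : F) ^ (((insert v τ.1).filter (fun u => u < w)).card) *
          c ⟨insert w (insert v τ.1), h.2.2⟩)
    else 0 with hG
  have hcond : ∀ v : ℕ, v ∉ τ.1 →
      (∀ w, w ∉ insert v τ.1 → insert w (insert v τ.1) ∈ K.filter (fun σ => σ.card = j + 1 + 1) →
        insert v τ.1 ∈ K.filter (fun σ => σ.card = j + 1)) := by
    intro v hv w hw hmem
    rw [mem_filter] at hmem ⊢
    have hτc : τ.1.card = j := (mem_filter.mp τ.2).2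
    refine ⟨hK _ hmem.1 _ (subset_insert _ _), ?_⟩
    rw [card_insert_of_notMem hv, hτc]
  have step1 : ∀ v ∈ verts K,
      (if h : v ∉ τ.1 ∧ insert v τ.1 ∈ K.filter (fun σ => σ.card = j + 1) then
          (-1 : F) ^ ((τ.1.filter (fun u => u < v)).card) *
            (bdry F K (j + 1) c) ⟨insert v τ.1, h.2⟩
        else 0) = ∑ w ∈ verts K, G v w := by
    intro v _
    by_cases hP : v ∉ τ.1 ∧ insert v τ.1 ∈ K.filter (fun σ => σ.card = j + 1)
    · rw [dif_pos hP, bdry_apply, mul_sum]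
      refine sum_congr rfl fun w _ => ?_
      simp only [hG]
      by_cases hQ : w ∉ insert v τ.1 ∧
          insert w (insert v τ.1) ∈ K.filter (fun σ => σ.card = j + 1 + 1)
      · rw [dif_pos hQ, dif_pos ⟨hP.1, hQ.1, hQ.2⟩]
      · rw [dif_neg hQ, mul_zero, dif_neg (by tauto)]
    · rw [dif_neg hP]
      symm
      refine sum_eq_zero fun w _ => ?_
      simp only [hG]
      rw [dif_neg]
      rintro ⟨h1, h2, h3⟩
      exact hP ⟨h1, hcond v h1 w h2 h3⟩
  rw [sum_congr rfl step1, ← sum_product']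
  refine sum_involution (fun p _ => (p.2, p.1)) ?_ ?_ ?_ ?_
  · rintro ⟨v, w⟩ hp
    by_cases h1 : v ∉ τ.1 ∧ w ∉ insert v τ.1 ∧
        insert w (insert v τ.1) ∈ K.filter (fun σ => σ.card = j + 1 + 1)
    · obtain ⟨hv, hw', hmem⟩ := h1
      have hvw : v ≠ w := fun h => hw' (h ▸ mem_insert_self v τ.1)
      have hw : w ∉ τ.1 := fun h => hw' (mem_insert_of_mem h)
      have h2 : w ∉ τ.1 ∧ v ∉ insert w τ.1 ∧
          insert v (insert w τ.1) ∈ K.filter (fun σ => σ.card = j + 1 + 1) := by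
        refine ⟨hw, by simp [hv, hvw], ?_⟩
        rwa [Finset.insert_comm]
      show G v w + G w v = 0
      simp only [hG]
      rw [dif_pos ⟨hv, hw', hmem⟩, dif_pos h2]
      have hceq : c ⟨insert w (insert v τ.1), hmem⟩
          = c ⟨insert v (insert w τ.1), h2.2.2⟩ := by
        congr 1
        exact Subtype.ext (Finset.insert_comm w v τ.1)
      rw [hceq, ← mul_assoc, ← mul_assoc, neg_one_pow_antisym F hvw τ.1 hv hw]
      ring
    · have h2 : ¬(w ∉ τ.1 ∧ v ∉ insert w τ.1 ∧
          insert v (insert w τ.1) ∈ K.filter (fun σ => σ.card = j + 1 + 1)) := by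
        rintro ⟨hw, hv', hmem⟩
        have hvw : w ≠ v := fun h => hv' (h ▸ mem_insert_self w τ.1)
        exact h1 ⟨fun h => hv' (mem_insert_of_mem h), by simp [hw, hvw],
          by rwa [Finset.insert_comm]⟩
      show G v w + G w v = 0
      simp only [hG]
      rw [dif_neg h1, dif_neg h2, add_zero]
  · rintro ⟨v, w⟩ hp hne
    intro heq
    have : w = v := congrArg Prod.fst heq
    subst this
    apply hne
    simp only [hG]
    rw [dif_neg]
    rintro ⟨-, h2, -⟩
    exact h2 (mem_insert_self _ _)
  · rintro ⟨v, w⟩ hp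
    rw [mem_product] at hp ⊢
    exact ⟨hp.2, hp.1⟩
  · rintro ⟨v, w⟩ hp
    rfl

/-- Extension of a chain to all finsets by zero. -/
noncomputable def cext (K : Finset (Finset ℕ)) (n : ℕ) (c : Chain F K n) : Finset ℕ → F :=
  fun σ => if h : σ ∈ K.filter (fun τ => τ.card = n) then c ⟨σ, h⟩ else 0

lemma cext_pos (K : Finset (Finset ℕ)) (n : ℕ) (c : Chain F K n) (σ : Finset ℕ)
    (h : σ ∈ K.filter (fun τ => τ.card = n)) : cext F K n c σ = c ⟨σ, h⟩ := dif_pos h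

lemma bdry_apply_cext (J : Finset ℕ) (d j : ℕ) (hj : j ≤ d) (c : Chain F (KJ J d) (j + 1))
    (τ : {σ // σ ∈ (KJ J d).filter (fun σ => σ.card = j)}) :
    bdry F (KJ J d) j c τ =
      ∑ v ∈ J, if v ∈ τ.1 then 0
        else (-1 : F) ^ ((τ.1.filter (fun u => u < v)).card) *
          cext F (KJ J d) (j + 1) c (insert v τ.1) := by
  rw [bdry_apply, verts_KJ]
  refine sum_congr rfl fun v hv => ?_
  have hτ := mem_filter.mp τ.2
  by_cases hvτ : v ∈ τ.1
  · rw [if_pos hvτ, dif_neg (fun h => h.1 hvτ)]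
  · have hmem : insert v τ.1 ∈ (KJ J d).filter (fun σ => σ.card = j + 1) := by
      rw [mem_filter, mem_KJ, card_insert_of_notMem hvτ, hτ.2]
      exact ⟨⟨insert_subset hv (mem_KJ.mp hτ.1).1, by omega⟩, rfl⟩
    rw [if_neg hvτ, dif_pos ⟨hvτ, hmem⟩, cext_pos F _ _ c _ hmem]

lemma erase_filter_lt_self (a : ℕ) (τ : Finset ℕ) :
    (τ.erase a).filter (fun u => u < a) = τ.filter (fun u => u < a) := by
  ext x
  simp only [mem_filter, mem_erase]
  constructor
  · rintro ⟨⟨-, hx⟩, hlt⟩; exact ⟨hx, hlt⟩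
  · rintro ⟨hx, hlt⟩; exact ⟨⟨by omega, hx⟩, hlt⟩

lemma exists_preimage (J : Finset ℕ) (d k : ℕ) (hk : k + 1 ≤ d) {a : ℕ} (ha : a ∈ J)
    (c : Chain F (KJ J d) (k + 1)) (hc : bdry F (KJ J d) k c = 0) :
    ∃ e : Chain F (KJ J d) (k + 1 + 1), bdry F (KJ J d) (k + 1) e = c := by
  classical
  refine ⟨fun σ' => if a ∈ σ'.1 then
      (-1 : F) ^ ((σ'.1.filter (fun u => u < a)).card) *
        cext F (KJ J d) (k + 1) c (σ'.1.erase a)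
    else 0, ?_⟩
  funext τ
  obtain ⟨hτK, hτc⟩ := mem_filter.mp τ.2
  obtain ⟨hτJ, hτd⟩ := mem_KJ.mp hτK
  rw [bdry_apply_cext F J d (k + 1) hk _ τ]
  by_cases haτ : a ∈ τ.1
  · -- main case: `a ∈ τ`
    have hρ : τ.1.erase a ∈ (KJ J d).filter (fun σ => σ.card = k) := by
      rw [mem_filter, mem_KJ, card_erase_of_mem haτ, hτc]
      exact ⟨⟨(erase_subset _ _).trans hτJ, by omega⟩, rfl⟩
    have hc0 := congrFun hc ⟨τ.1.erase a, hρ⟩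
    rw [bdry_apply_cext F J d k (by omega) c ⟨τ.1.erase a, hρ⟩] at hc0
    simp only [Pi.zero_apply] at hc0
    have key : ∀ v ∈ J,
        (if v ∈ τ.1 then (0 : F)
          else (-1 : F) ^ ((τ.1.filter (fun u => u < v)).card) *
            cext F (KJ J d) (k + 1 + 1)
              (fun σ' => if a ∈ σ'.1 then
                  (-1 : F) ^ ((σ'.1.filter (fun u => u < a)).card) *
                    cext F (KJ J d) (k + 1) c (σ'.1.erase a)
                else 0) (insert v τ.1))
        = (if v = a then c τ else 0)
          - (-1 : F) ^ (((τ.1.erase a).filter (fun u => u < a)).card) *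
            (if v ∈ τ.1.erase a then (0 : F)
              else (-1 : F) ^ (((τ.1.erase a).filter (fun u => u < v)).card) *
                cext F (KJ J d) (k + 1) c (insert v (τ.1.erase a))) := by
      intro v hv
      by_cases hva : v = a
      · subst hva
        rw [if_pos haτ, if_pos rfl, if_neg (notMem_erase v τ.1), insert_erase haτ,
          cext_pos F _ _ c _ τ.2, Subtype.coe_eta]
        rw [← mul_assoc, ← pow_add,
          Even.neg_one_pow ⟨((τ.1.erase v).filter (fun u => u < v)).card, rfl⟩, one_mul]
        ring
      · by_cases hvτ : v ∈ τ.1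
        · rw [if_pos hvτ, if_neg hva, if_pos (mem_erase.mpr ⟨hva, hvτ⟩), mul_zero, sub_zero]
        · have hmem' : insert v τ.1 ∈ (KJ J d).filter (fun σ => σ.card = k + 1 + 1) := by
            rw [mem_filter, mem_KJ, card_insert_of_notMem hvτ, hτc]
            exact ⟨⟨insert_subset hv hτJ, by omega⟩, rfl⟩
          rw [if_neg hvτ, if_neg hva, if_neg (fun h => hvτ (erase_subset _ _ h)),
            cext_pos F _ _ _ _ hmem']
          dsimp only
          rw [if_pos (mem_insert_of_mem haτ),
            erase_insert_of_ne hva]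
          have h2 : ((insert v τ.1).filter (fun u => u < a)).card
              = ((τ.1.erase a).filter (fun u => u < a)).card + (if v < a then 1 else 0) := by
            rw [card_filter_lt_insert v a τ.1 hvτ, erase_filter_lt_self]
          have h3 : (τ.1.filter (fun u => u < v)).card
              = ((τ.1.erase a).filter (fun u => u < v)).card + (if a < v then 1 else 0) := by
            conv_lhs => rw [← insert_erase haτ]
            rw [card_filter_lt_insert a v _ (notMem_erase a τ.1)]
          rw [h2, h3]
          rcases Ne.lt_or_gt hva with h | h
          · rw [if_pos h, if_neg (show ¬ a < v by omega)]
            ring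
          · rw [if_neg (show ¬ v < a by omega), if_pos h]
            ring
    refine (Finset.sum_congr rfl key).trans ?_
    rw [sum_sub_distrib, ← mul_sum, hc0, mul_zero, sub_zero, sum_ite_eq' J a fun _ => c τ,
      if_pos ha]
  · -- easy case: `a ∉ τ`
    have hmem' : insert a τ.1 ∈ (KJ J d).filter (fun σ => σ.card = k + 1 + 1) := by
      rw [mem_filter, mem_KJ, card_insert_of_notMem haτ, hτc]
      exact ⟨⟨insert_subset ha hτJ, by omega⟩, rfl⟩
    rw [Finset.sum_eq_single_of_mem a ha]
    · rw [if_neg haτ, cext_pos F _ _ _ _ hmem']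
      dsimp only
      rw [if_pos (mem_insert_self a τ.1), erase_insert haτ,
        cext_pos F _ _ c _ τ.2, Subtype.coe_eta]
      have h2 : ((insert a τ.1).filter (fun u => u < a)).card
          = (τ.1.filter (fun u => u < a)).card := by
        rw [card_filter_lt_insert a a τ.1 haτ, if_neg (lt_irrefl a), add_zero]
      rw [h2, ← mul_assoc, ← pow_add,
        Even.neg_one_pow ⟨(τ.1.filter (fun u => u < a)).card, rfl⟩, one_mul]
    · intro v hv hva
      by_cases hvτ : v ∈ τ.1
      · rw [if_pos hvτ]
      · have hmem'' : insert v τ.1 ∈ (KJ J d).filter (fun σ => σ.card = k + 1 + 1) := by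
          rw [mem_filter, mem_KJ, card_insert_of_notMem hvτ, hτc]
          exact ⟨⟨insert_subset hv hτJ, by omega⟩, rfl⟩
        rw [if_neg hvτ, cext_pos F _ _ _ _ hmem'']
        dsimp only
        rw [if_neg (by simp [haτ, Ne.symm hva]), mul_zero]

lemma rank_bdry_zero (J : Finset ℕ) (d : ℕ) (hJ : J.Nonempty) :
    Module.finrank F (LinearMap.range (bdry F (KJ J d) 0)) = 1 := by
  classical
  obtain ⟨a, ha⟩ := hJ
  have hempty : (∅ : Finset ℕ) ∈ (KJ J d).filter (fun σ => σ.card = 0) := by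
    rw [mem_filter, mem_KJ]
    exact ⟨⟨empty_subset J, by simp⟩, rfl⟩
  set c : Chain F (KJ J d) 1 := fun σ => if σ.1 = {a} then 1 else 0 with hcdef
  have hval : bdry F (KJ J d) 0 c ⟨∅, hempty⟩ = 1 := by
    rw [bdry_apply_cext F J d 0 (Nat.zero_le d) c ⟨∅, hempty⟩]
    have hpt : ∀ v ∈ J,
        (if v ∈ ((⟨∅, hempty⟩ : {σ // σ ∈ (KJ J d).filter (fun σ => σ.card = 0)}) : Finset ℕ)
          then (0 : F)
          else (-1 : F) ^ ((((⟨∅, hempty⟩ : {σ // σ ∈ (KJ J d).filter (fun σ => σ.card = 0)})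
              : Finset ℕ).filter (fun u => u < v)).card) *
            cext F (KJ J d) 1 c (insert v (((⟨∅, hempty⟩ :
              {σ // σ ∈ (KJ J d).filter (fun σ => σ.card = 0)}) : Finset ℕ))))
        = if v = a then 1 else 0 := by
      intro v hv
      have hm : insert v (∅ : Finset ℕ) ∈ (KJ J d).filter (fun σ => σ.card = 1) := by
        rw [mem_filter, mem_KJ]
        refine ⟨⟨?_, by simp⟩, by simp⟩
        simp [insert_subset_iff, hv]
      rw [if_neg (notMem_empty v), cext_pos F _ _ c _ hm]
      simp only [hcdef, filter_empty, card_empty, pow_zero, one_mul]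
      simp [insert_empty_eq]
    rw [Finset.sum_congr rfl hpt, sum_ite_eq' J a fun _ => (1 : F), if_pos ha]
  apply le_antisymm
  · have h1 := Submodule.finrank_le (LinearMap.range (bdry F (KJ J d) 0))
    rwa [finrank_chain F J d 0 (by omega), Nat.choose_zero_right] at h1
  · by_contra hlt
    have h0 : Module.finrank F (LinearMap.range (bdry F (KJ J d) 0)) = 0 := by omega
    have hbot : LinearMap.range (bdry F (KJ J d) 0) = ⊥ := Submodule.finrank_eq_zero.mp h0
    have hmem : bdry F (KJ J d) 0 c ∈ LinearMap.range (bdry F (KJ J d) 0) :=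
      LinearMap.mem_range_self _ c
    rw [hbot, Submodule.mem_bot] at hmem
    rw [hmem] at hval
    simp at hval

lemma ker_eq_range (J : Finset ℕ) (d k : ℕ) (hk : k + 1 ≤ d) (hJ : J.Nonempty) :
    LinearMap.ker (bdry F (KJ J d) k) = LinearMap.range (bdry F (KJ J d) (k + 1)) := by
  obtain ⟨a, ha⟩ := hJ
  apply le_antisymm
  · intro c hcker
    obtain ⟨e, he⟩ := exists_preimage F J d k hk ha c (LinearMap.mem_ker.mp hcker)
    exact ⟨e, he⟩
  · rintro _ ⟨e, rfl⟩
    rw [LinearMap.mem_ker]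
    exact bdry_bdry F (KJ J d) (isComplex_KJ J d) k e

lemma rank_bdry (J : Finset ℕ) (d : ℕ) (hJ : J.Nonempty) :
    ∀ i, i ≤ d → Module.finrank F (LinearMap.range (bdry F (KJ J d) i))
      = (J.card - 1).choose i := by
  intro i
  induction i with
  | zero => intro _; rw [rank_bdry_zero F J d hJ, Nat.choose_zero_right]
  | succ k ih =>
    intro hk
    have e1 := LinearMap.finrank_range_add_finrank_ker (bdry F (KJ J d) k)
    rw [finrank_chain F J d (k + 1) (by omega), ih (by omega),
      ker_eq_range F J d k hk hJ] at e1
    obtain ⟨n, hn⟩ : ∃ n, J.card = n + 1 :=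
      ⟨J.card - 1, by have := Finset.card_pos.mpr hJ; omega⟩
    rw [hn] at e1 ⊢
    simp only [Nat.add_sub_cancel] at e1 ⊢
    have hp : (n + 1).choose (k + 1) = n.choose k + n.choose (k + 1) :=
      Nat.choose_succ_succ n k
    omega

lemma rank_bdry_gt (J : Finset ℕ) (d i : ℕ) (hi : d < i) :
    Module.finrank F (LinearMap.range (bdry F (KJ J d) i)) = 0 := by
  have h := LinearMap.finrank_range_le (bdry F (KJ J d) i)
  rw [finrank_chain_zero F J d (i + 1) (by omega)] at h
  omega

lemma hBetti_KJ (J : Finset ℕ) (d : ℕ) (hJ : J.Nonempty) (i : ℕ) :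
    hBetti F (KJ J d) i = if i = d + 1 then (J.card - 1).choose (d + 1) else 0 := by
  obtain ⟨n, hn⟩ : ∃ n, J.card = n + 1 :=
    ⟨J.card - 1, by have := Finset.card_pos.mpr hJ; omega⟩
  match i with
  | 0 =>
    rw [if_neg (by omega)]
    simp only [hBetti]
    rw [finrank_chain F J d 0 (by omega), rank_bdry_zero F J d hJ, Nat.choose_zero_right]
  | t + 1 =>
    simp only [hBetti]
    have e1 := LinearMap.finrank_range_add_finrank_ker (bdry F (KJ J d) t)
    rcases le_or_gt (t + 1) d with h | h
    · rw [if_neg (by omega), rank_bdry F J d hJ (t + 1) h]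
      rw [finrank_chain F J d (t + 1) (by omega), rank_bdry F J d hJ t (by omega)] at e1
      rw [hn] at e1 ⊢
      simp only [Nat.add_sub_cancel] at e1 ⊢
      have hp : (n + 1).choose (t + 1) = n.choose t + n.choose (t + 1) :=
        Nat.choose_succ_succ n t
      omega
    · by_cases htd : t = d
      · subst htd
        rw [if_pos rfl]
        rw [finrank_chain F J t (t + 1) (le_refl _), rank_bdry F J t hJ t (le_refl _)] at e1
        rw [rank_bdry_gt F J t (t + 1) (by omega)]
        rw [hn] at e1 ⊢
        simp only [Nat.add_sub_cancel] at e1 ⊢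
        have hp : (n + 1).choose (t + 1) = n.choose t + n.choose (t + 1) :=
          Nat.choose_succ_succ n t
        omega
      · rw [if_neg (by omega)]
        have h0 : Module.finrank F (LinearMap.ker (bdry F (KJ J d) t)) = 0 := by
          have hle := Submodule.finrank_le (LinearMap.ker (bdry F (KJ J d) t))
          rw [finrank_chain_zero F J d (t + 1) (by omega)] at hle
          omega
        rw [h0]
        omega

lemma rtb_KJ (J : Finset ℕ) (d : ℕ) :
    rtb F (KJ J d) = if J = ∅ then 1 else (J.card - 1).choose (d + 1) := by
  classical
  have hne : KJ J d ≠ ∅ := by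
    intro h
    have hmem : (∅ : Finset ℕ) ∈ KJ J d := mem_KJ.mpr ⟨empty_subset J, by simp⟩
    rw [h] at hmem
    exact notMem_empty _ hmem
  rw [rtb, if_neg hne, verts_KJ]
  by_cases hJ : J = ∅
  · subst hJ
    rw [if_pos rfl]
    simp only [Finset.card_empty, zero_add, sum_range_one]
    simp only [hBetti]
    have h0 : Module.finrank F (LinearMap.range (bdry F (KJ ∅ d) 0)) = 0 := by
      have h := LinearMap.finrank_range_le (bdry F (KJ (∅ : Finset ℕ) d) 0)
      rw [finrank_chain F ∅ d 1 (by omega)] at h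
      simpa using h
    rw [h0, finrank_chain F ∅ d 0 (by omega)]
    simp
  · rw [if_neg hJ]
    have hJne : J.Nonempty := nonempty_iff_ne_empty.mpr hJ
    rw [Finset.sum_congr rfl fun i _ => hBetti_KJ F J d hJne i,
      sum_ite_eq' (range (J.card + 1)) (d + 1) fun _ => (J.card - 1).choose (d + 1)]
    by_cases hd : d + 1 ∈ range (J.card + 1)
    · rw [if_pos hd]
    · rw [if_neg hd]
      rw [mem_range, not_lt] at hd
      exact (Nat.choose_eq_zero_of_lt (by omega)).symm

lemma Dtilde_eq (m d : ℕ) (hd : d < m) :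
    Dtilde F (Finset.range m) (skel m d) = g m (d + 1) + 1 := by
  classical
  rw [Dtilde]
  have h1 : ∀ J ∈ (Finset.range m).powerset,
      rtb F (restr (skel m d) J)
        = (J.card - 1).choose (d + 1) + (if J = ∅ then 1 else 0) := by
    intro J hJ
    rw [restr_skel (mem_powerset.mp hJ), rtb_KJ]
    by_cases h : J = ∅
    · subst h
      rw [if_pos rfl, if_pos rfl]
      simp [Nat.choose_eq_zero_of_lt (Nat.succ_pos d)]
    · rw [if_neg h, if_neg h, add_zero]
  rw [Finset.sum_congr rfl h1, sum_add_distrib]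
  congr 1
  · rw [Finset.sum_powerset (range m) (fun t => (t.card - 1).choose (d + 1))]
    have h2 : ∀ j ∈ range ((range m).card + 1),
        (∑ t ∈ powersetCard j (range m), (t.card - 1).choose (d + 1))
          = m.choose j * ((j - 1).choose (d + 1)) := by
      intro j _
      have := Finset.sum_powersetCard j (range m) (fun x => (x - 1).choose (d + 1))
      rw [this, card_range, smul_eq_mul]
    rw [Finset.sum_congr rfl h2, card_range, g]
    symm
    apply Finset.sum_subset
    · intro j hj
      rw [mem_Icc] at hj
      rw [mem_range]
      omega
    · intro j _ hj
      rw [mem_Icc, not_and_or, not_le, not_le] at hj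
      rcases hj with h | h
      · rw [Nat.choose_eq_zero_of_lt (show j - 1 < d + 1 by omega), mul_zero]
      · rw [Nat.choose_eq_zero_of_lt h, zero_mul]
  · rw [sum_ite_eq' ((range m).powerset) ∅ fun _ => 1, if_pos (empty_mem_powerset _)]

lemma g_eq (m d : ℕ) :
    g m (d + 1) = ∑ i ∈ Finset.range (m - d - 1), m.choose (m - i) * (m - i - 1).choose (d + 1) := by
  rw [g]
  refine Finset.sum_nbij' (fun j => m - j) (fun i => m - i) ?_ ?_ ?_ ?_ ?_
  · intro j hj
    simp only [mem_Icc] at hj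
    simp only [mem_range]
    omega
  · intro i hi
    simp only [mem_range] at hi
    simp only [mem_Icc]
    omega
  · intro j hj
    simp only [mem_Icc] at hj
    omega
  · intro i hi
    simp only [mem_range] at hi
    omega
  · intro j hj
    simp only [mem_Icc] at hj
    rw [Nat.sub_sub_self hj.2]

end Stmt9Aux


/-- The total bigraded Betti number of the `d`-skeleton of the full
simplex on `[m]`:  `D̃(Δ^[m]_(d);F) = g(m, d+1) + 1 = ∑_{i=0}^{m-d-2} C(m, m-i)·C(m-i-1, d+1) + 1`. -/
theorem stmt9 (F : Type*) [Field F] (m d : ℕ) (hd : d < m) :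
    Dtilde F (Finset.range m) (skel m d) = g m (d + 1) + 1 ∧
      g m (d + 1) + 1 =
        (∑ i ∈ Finset.range (m - d - 1), m.choose (m - i) * (m - i - 1).choose (d + 1)) + 1 := by
  exact ⟨Stmt9Aux.Dtilde_eq F m d hd, by rw [Stmt9Aux.g_eq m d]⟩
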